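/- For every integer n ≥ 0, the graph R̃_n is isomorphic to the suspension graph S(n+2, 2). -/

import Mathlib

/-- The complete bridge graph `B_{m,n}` on vertex set `Fin (m+n)` (0-indexed version of the
paper's `{1, …, m+n}`): vertices `0, …, m-1` form a complete graph `K_m`, vertices
`m, …, m+n-1` form a complete graph `K_n`, and the only further edge is the bridge joining
vertex `m-1` (the paper's vertex `m`) to vertex `m` (the paper's vertex `m+1`). -/
def bridgeGraph (m n : ℕ) : SimpleGraph (Fin (m + n)) :=
  SimpleGraph.fromRel (fun i j =>
    ((i : ℕ) < m ∧ (j : ℕ) < m) ∨ (m ≤ (i : ℕ) ∧ m ≤ (j : ℕ)) ∨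
      ((i : ℕ) + 1 = m ∧ (j : ℕ) = m))

instance (m n : ℕ) : DecidableRel (bridgeGraph m n).Adj := fun i j =>
  decidable_of_iff (i ≠ j ∧
      ((((i : ℕ) < m ∧ (j : ℕ) < m) ∨ (m ≤ (i : ℕ) ∧ m ≤ (j : ℕ)) ∨
        ((i : ℕ) + 1 = m ∧ (j : ℕ) = m)) ∨
       (((j : ℕ) < m ∧ (i : ℕ) < m) ∨ (m ≤ (j : ℕ) ∧ m ≤ (i : ℕ)) ∨
        ((j : ℕ) + 1 = m ∧ (i : ℕ) = m)))) Iff.rfl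

/-- The suspension graph `S(m,n)`: the complete bridge graph `B_{m,n}` (on the vertices with
value `< m + n`) together with one new vertex (the vertex with value `m + n`) joined to every
vertex of `B_{m,n}` except the two bridge vertices (the paper's vertices `m` and `m+1`, i.e.
the Lean vertices with values `m-1` and `m`). -/
def suspGraph (m n : ℕ) : SimpleGraph (Fin (m + n + 1)) :=
  SimpleGraph.fromRel (fun i j =>
    ((i : ℕ) < m + n ∧ (j : ℕ) < m + n ∧
      (((i : ℕ) < m ∧ (j : ℕ) < m) ∨ (m ≤ (i : ℕ) ∧ m ≤ (j : ℕ)) ∨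
        ((i : ℕ) + 1 = m ∧ (j : ℕ) = m))) ∨
    ((i : ℕ) = m + n ∧ (j : ℕ) < m + n ∧ (j : ℕ) + 1 ≠ m ∧ (j : ℕ) ≠ m))

instance (m n : ℕ) : DecidableRel (suspGraph m n).Adj := fun i j =>
  decidable_of_iff (i ≠ j ∧
    ((((i : ℕ) < m + n ∧ (j : ℕ) < m + n ∧
      (((i : ℕ) < m ∧ (j : ℕ) < m) ∨ (m ≤ (i : ℕ) ∧ m ≤ (j : ℕ)) ∨
        ((i : ℕ) + 1 = m ∧ (j : ℕ) = m))) ∨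
     ((i : ℕ) = m + n ∧ (j : ℕ) < m + n ∧ (j : ℕ) + 1 ≠ m ∧ (j : ℕ) ≠ m)) ∨
     (((j : ℕ) < m + n ∧ (i : ℕ) < m + n ∧
      (((j : ℕ) < m ∧ (i : ℕ) < m) ∨ (m ≤ (j : ℕ) ∧ m ≤ (i : ℕ)) ∨
        ((j : ℕ) + 1 = m ∧ (i : ℕ) = m))) ∨
     ((j : ℕ) = m + n ∧ (i : ℕ) < m + n ∧ (i : ℕ) + 1 ≠ m ∧ (i : ℕ) ≠ m)))) Iff.rfl

/-- The 5-cycle `C₅` on `Fin 5`. -/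
def cycle5 : SimpleGraph (Fin 5) :=
  SimpleGraph.fromRel (fun i j => j = i + 1)

instance : DecidableRel cycle5.Adj := fun i j =>
  decidable_of_iff (i ≠ j ∧ (j = i + 1 ∨ i = j + 1)) Iff.rfl

/-- Duplicating the vertex `v'` of a simple graph `G`: a new vertex (the `Sum.inr` vertex) is
added, adjacent to `v'` and to every neighbor of `v'` in `G`. -/
def dupGraph {V : Type*} (G : SimpleGraph V) (v' : V) : SimpleGraph (V ⊕ Unit) where
  Adj x y :=
    match x, y with
    | Sum.inl a, Sum.inl b => G.Adj a b
    | Sum.inl a, Sum.inr _ => a = v' ∨ G.Adj a v'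
    | Sum.inr _, Sum.inl b => b = v' ∨ G.Adj b v'
    | Sum.inr _, Sum.inr _ => False
  symm := by
    constructor
    rintro (a | a) (b | b) h
    · exact G.symm.symm _ _ h
    · exact h
    · exact h
    · exact h.elim
  loopless := by
    constructor
    rintro (a | a) h
    · exact G.loopless.irrefl a h
    · exact h.elim

instance dupGraphAdjDecidable {V : Type*} [DecidableEq V] (G : SimpleGraph V)
    [DecidableRel G.Adj] (v' : V) : DecidableRel (dupGraph G v').Adj := fun x y =>
  match x, y with
  | Sum.inl a, Sum.inl b => inferInstanceAs (Decidable (G.Adj a b))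
  | Sum.inl a, Sum.inr _ => inferInstanceAs (Decidable (a = v' ∨ G.Adj a v'))
  | Sum.inr _, Sum.inl b => inferInstanceAs (Decidable (b = v' ∨ G.Adj b v'))
  | Sum.inr _, Sum.inr _ => inferInstanceAs (Decidable False)

/-- The vertex type of the reseminant graph built from `C₅` by the duplications recorded in
the list `l` (each entry records which of the five original cycle vertices is duplicated). -/
def resemType : List (Fin 5) → Type
  | [] => Fin 5
  | _ :: l => resemType l ⊕ Unit

instance resemTypeFintype : ∀ l : List (Fin 5), Fintype (resemType l)
  | [] => inferInstanceAs (Fintype (Fin 5))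
  | _ :: l => letI := resemTypeFintype l; inferInstanceAs (Fintype (resemType l ⊕ Unit))

instance resemTypeDecEq : ∀ l : List (Fin 5), DecidableEq (resemType l)
  | [] => inferInstanceAs (DecidableEq (Fin 5))
  | _ :: l => letI := resemTypeDecEq l; inferInstanceAs (DecidableEq (resemType l ⊕ Unit))

/-- The copy, inside `resemType l`, of an original vertex of the 5-cycle. -/
def origVert : (l : List (Fin 5)) → Fin 5 → resemType l
  | [], i => i
  | _ :: l, i => Sum.inl (origVert l i)

/-- The reseminant graph obtained from the 5-cycle `C₅` by the finite sequence of vertex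
duplications recorded in `l`: for `l = v :: l'`, the vertex (the copy of the original cycle
vertex) `v` is duplicated in the graph built from `l'`. -/
def resemGraph : (l : List (Fin 5)) → SimpleGraph (resemType l)
  | [] => cycle5
  | v :: l => dupGraph (resemGraph l) (origVert l v)

instance resemGraphAdjDecidable : ∀ l : List (Fin 5), DecidableRel (resemGraph l).Adj
  | [] => inferInstanceAs (DecidableRel cycle5.Adj)
  | v :: l =>
    letI := resemGraphAdjDecidable l
    inferInstanceAs (DecidableRel (dupGraph (resemGraph l) (origVert l v)).Adj)

/-- A simple graph is *reseminant* if it is (isomorphic to) a graph obtained from the 5-cycle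
`C₅` by a finite sequence of vertex duplications, each duplicating one of the five original
cycle vertices. -/
def IsReseminant {V : Type*} (Γ : SimpleGraph V) : Prop :=
  ∃ l : List (Fin 5), Nonempty (Γ ≃g resemGraph l)

/-- `R̃_n`: the reseminant graph on `n + 5` vertices obtained from `C₅` by `n` successive
duplications, all duplicating the same fixed vertex `0` of the original 5-cycle. -/
def tildeR (n : ℕ) : SimpleGraph (resemType (List.replicate n 0)) :=
  resemGraph (List.replicate n 0)

/-- Transport duplication along a pointed isomorphism. -/
def dupIsoGen {V W : Type*} {G : SimpleGraph V} {H : SimpleGraph W} (e : G ≃g H) (v : V)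
    (w : W) (h : e v = w) : dupGraph G v ≃g dupGraph H w where
  toEquiv := Equiv.sumCongr e.toEquiv (Equiv.refl Unit)
  map_rel_iff' := by
    subst h
    rintro (a | a) (b | b)
    · exact e.map_rel_iff
    · show (e a = e v ∨ H.Adj (e a) (e v)) ↔ (a = v ∨ G.Adj a v)
      simp [e.map_rel_iff]
    · show (e b = e v ∨ H.Adj (e b) (e v)) ↔ (b = v ∨ G.Adj b v)
      simp [e.map_rel_iff]
    · exact Iff.rfl

def shiftEquiv' (n : ℕ) : (Fin (n + 2 + 2 + 1)) ⊕ Unit ≃ Fin (n + 3 + 2 + 1) where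
  toFun x := match x with
    | Sum.inl i => if (i : ℕ) ≤ n then ⟨i, by omega⟩ else ⟨(i : ℕ) + 1, by omega⟩
    | Sum.inr _ => ⟨n + 1, by omega⟩
  invFun j :=
    if h : (j : ℕ) ≤ n then Sum.inl ⟨j, by omega⟩
    else if h2 : (j : ℕ) = n + 1 then Sum.inr ()
    else Sum.inl ⟨(j : ℕ) - 1, by omega⟩
  left_inv := by
    rintro (i | ⟨⟩)
    · dsimp only
      by_cases h : (i : ℕ) ≤ n
      · rw [if_pos h]
        dsimp only
        rw [dif_pos h]
      · rw [if_neg h]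
        dsimp only
        rw [dif_neg (by omega), dif_neg (by omega)]
        exact congrArg Sum.inl (Fin.ext (show (i : ℕ) + 1 - 1 = (i : ℕ) by omega))
    · dsimp only
      rw [dif_neg (by omega), dif_pos rfl]
  right_inv := by
    intro j
    dsimp only
    by_cases h : (j : ℕ) ≤ n
    · rw [dif_pos h]
      dsimp only
      rw [if_pos h]
    · by_cases h2 : (j : ℕ) = n + 1
      · rw [dif_neg h, dif_pos h2]
        exact Fin.ext h2.symm
      · rw [dif_neg h, dif_neg h2]
        dsimp only
        rw [if_neg (show ¬((j : ℕ) - 1 ≤ n) by omega)]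
        exact Fin.ext (show (j : ℕ) - 1 + 1 = (j : ℕ) by omega)

def stepIso (n : ℕ) :
    dupGraph (suspGraph (n + 2) 2) ⟨0, by omega⟩ ≃g suspGraph (n + 3) 2 where
  toEquiv := shiftEquiv' n
  map_rel_iff' := by
    intro x y
    obtain (a | a) := x <;> obtain (b | b) := y
    · have ha := a.isLt; have hb := b.isLt
      show (suspGraph (n+3) 2).Adj
          (if (a:ℕ) ≤ n then ⟨(a:ℕ), by omega⟩ else ⟨(a:ℕ)+1, by omega⟩)
          (if (b:ℕ) ≤ n then ⟨(b:ℕ), by omega⟩ else ⟨(b:ℕ)+1, by omega⟩) ↔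
        (suspGraph (n+2) 2).Adj a b
      simp only [suspGraph, SimpleGraph.fromRel_adj]
      split_ifs <;> ((try simp only [Ne, Fin.ext_iff, false_and, and_false, false_or, or_false, true_and, and_true]); (try dsimp only); omega)
    · have ha := a.isLt
      show (suspGraph (n+3) 2).Adj
          (if (a:ℕ) ≤ n then ⟨(a:ℕ), by omega⟩ else ⟨(a:ℕ)+1, by omega⟩)
          ⟨n+1, by omega⟩ ↔
        (a = ⟨0, by omega⟩ ∨ (suspGraph (n+2) 2).Adj a ⟨0, by omega⟩)
      simp only [suspGraph, SimpleGraph.fromRel_adj]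
      split_ifs <;> ((try simp only [Ne, Fin.ext_iff, false_and, and_false, false_or, or_false, true_and, and_true]); (try dsimp only); omega)
    · have hb := b.isLt
      show (suspGraph (n+3) 2).Adj ⟨n+1, by omega⟩
          (if (b:ℕ) ≤ n then ⟨(b:ℕ), by omega⟩ else ⟨(b:ℕ)+1, by omega⟩) ↔
        (b = ⟨0, by omega⟩ ∨ (suspGraph (n+2) 2).Adj b ⟨0, by omega⟩)
      simp only [suspGraph, SimpleGraph.fromRel_adj]
      split_ifs <;> ((try simp only [Ne, Fin.ext_iff, false_and, and_false, false_or, or_false, true_and, and_true]); (try dsimp only); omega)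
    · exact iff_of_false ((suspGraph (n+3) 2).irrefl) not_false

theorem key (n : ℕ) : ∃ e : tildeR n ≃g suspGraph (n + 2) 2,
    e (origVert (List.replicate n 0) 0) = ⟨0, by omega⟩ := by
  induction n with
  | zero =>
    refine ⟨⟨Equiv.refl _, @fun a b => ?_⟩, rfl⟩
    exact (by decide :
      ∀ a b : Fin 5, (suspGraph (0+2) 2).Adj a b ↔ cycle5.Adj a b) a b
  | succ n ih =>
    obtain ⟨e, ih⟩ := ih
    let e1 : tildeR (n + 1) ≃g dupGraph (suspGraph (n + 2) 2) ⟨0, by omega⟩ :=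
      dupIsoGen e (origVert (List.replicate n 0) 0) ⟨0, by omega⟩ ih
    refine ⟨e1.trans (stepIso n), ?_⟩
    have h2 : e1 (origVert (List.replicate (n+1) 0) 0)
        = Sum.inl (⟨0, by omega⟩ : Fin (n + 2 + 2 + 1)) := by
      show Sum.inl (e (origVert (List.replicate n 0) 0)) = _
      rw [ih]
    have h1 : (e1.trans (stepIso n)) (origVert (List.replicate (n+1) 0) 0)
        = stepIso n (e1 (origVert (List.replicate (n+1) 0) 0)) := rfl
    have h3 : (stepIso n).toEquiv (Sum.inl (⟨0, by omega⟩ : Fin (n + 2 + 2 + 1)))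
        = ⟨0, by omega⟩ := by
      dsimp only [stepIso, shiftEquiv', Equiv.coe_fn_mk]
      rw [if_pos (Nat.zero_le n)]
    rw [h1, h2]
    exact h3

theorem tildeR_iso_suspGraph' (n : ℕ) :
    Nonempty (tildeR n ≃g suspGraph (n + 2) 2) :=
  (key n).elim fun e _ => ⟨e⟩

/-- For every integer `n ≥ 0`, the graph `R̃_n` is isomorphic to the
suspension graph `S(n+2, 2)`. -/
theorem tildeR_iso_suspGraph (n : ℕ) :
    Nonempty (tildeR n ≃g suspGraph (n + 2) 2) := by
  exact tildeR_iso_suspGraph' n
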